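/- Let G be a group and X ⊆ A^G a subshift. The set {τ_g : g Fix(X) ∈ Z(G/Fix(X))}, where τ_g(x)(h) = x(hg), is a subgroup of the center of Aut(X) and is isomorphic to Z(G/Fix(X)). -/

import Mathlib

/-- The (left) shift action on configurations: `(shift g x) h = x (g⁻¹ * h)`. -/
def shift {G A : Type*} [Group G] (g : G) (x : G → A) : G → A := fun h => x (g⁻¹ * h)

/-- A subshift: a closed, shift-invariant subset of the full shift `A^G`. -/
def IsSubshift {G A : Type*} [Group G] [TopologicalSpace A] (X : Set (G → A)) : Prop :=
  IsClosed X ∧ ∀ g : G, ∀ x ∈ X, shift g x ∈ X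

/-- `X` is strongly irreducible with constant `K`: whenever `S * K ∩ T = ∅`, any two
patterns of `X` with supports `S` and `T` can be jointly realized in `X`. -/
def StronglyIrreducible {G A : Type*} [Group G] (X : Set (G → A)) (K : Finset G) : Prop :=
  ∀ S T : Finset G, (∀ s ∈ S, ∀ k ∈ K, s * k ∉ T) →
    ∀ x ∈ X, ∀ y ∈ X, ∃ z ∈ X, (∀ g ∈ S, z g = x g) ∧ (∀ g ∈ T, z g = y g)

/-- The shift action on a shift-invariant subset, as a map `X → X`. -/
def shiftX {G A : Type*} [Group G] (X : Set (G → A))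
    (hX : ∀ g : G, ∀ x ∈ X, shift g x ∈ X) (g : G) (x : X) : X :=
  ⟨shift g (x : G → A), hX g x x.2⟩

/-- The automorphism group of a subshift `X`: shift-commuting self-homeomorphisms of `X`,
as a subgroup of the permutation group of `X`. -/
def Aut {G A : Type*} [Group G] [TopologicalSpace A] (X : Set (G → A))
    (hX : ∀ g : G, ∀ x ∈ X, shift g x ∈ X) : Subgroup (Equiv.Perm X) where
  carrier := {φ | Continuous φ ∧ Continuous φ.symm ∧
    ∀ (g : G) (x : X), φ (shiftX X hX g x) = shiftX X hX g (φ x)}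
  one_mem' := by
    refine ⟨?_, ?_, fun g x => rfl⟩
    · simpa using continuous_id
    · exact continuous_id
  mul_mem' := by
    rintro a b ⟨ha1, ha2, ha3⟩ ⟨hb1, hb2, hb3⟩
    refine ⟨?_, ?_, fun g x => ?_⟩
    · have : ⇑(a * b) = ⇑a ∘ ⇑b := rfl
      rw [this]; exact ha1.comp hb1
    · have : ⇑(a * b).symm = ⇑b.symm ∘ ⇑a.symm := rfl
      rw [this]; exact hb2.comp ha2
    · have h1 : (a * b) (shiftX X hX g x) = a (b (shiftX X hX g x)) := rfl
      have h2 : (a * b) x = a (b x) := rfl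
      rw [h1, h2, hb3, ha3]
  inv_mem' := by
    rintro a ⟨h1, h2, h3⟩
    refine ⟨?_, ?_, fun g x => ?_⟩
    · have : ⇑(a⁻¹) = ⇑a.symm := rfl
      rw [this]; exact h2
    · have : ⇑(a⁻¹).symm = ⇑a := rfl
      rw [this]; exact h1
    · apply a.injective
      have e : ∀ y, a (a⁻¹ y) = y := fun y => a.apply_symm_apply y
      rw [e, h3, e]

/-- The kernel of the shift action on `X`, as a subgroup of `G`. -/
def fixSubgroup {G A : Type*} [Group G] (X : Set (G → A)) : Subgroup G where
  carrier := {g | ∀ x ∈ X, shift g x = x}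
  one_mem' := by intro x hx; funext h; simp [shift]
  mul_mem' := by
    intro a b ha hb x hx
    have h1 : shift (a * b) x = shift a (shift b x) := by
      funext h; simp [shift, mul_assoc]
    rw [h1, hb x hx, ha x hx]
  inv_mem' := by
    intro a ha x hx
    have h1 : shift a⁻¹ (shift a x) = x := by funext h; simp [shift]
    calc shift a⁻¹ x = shift a⁻¹ (shift a x) := by rw [ha x hx]
      _ = x := h1

section Aux

variable {G A : Type*} [Group G]

lemma shift_mul' (a b : G) (x : G → A) : shift (a * b) x = shift a (shift b x) := by
  funext h; simp [shift, mul_assoc]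

lemma shift_congr {X : Set (G → A)} {g g' : G}
    (hgg : (QuotientGroup.mk g : G ⧸ fixSubgroup X) = QuotientGroup.mk g')
    {x : G → A} (hx : x ∈ X) : shift g x = shift g' x := by
  have hf : g⁻¹ * g' ∈ fixSubgroup X := QuotientGroup.eq.mp hgg
  have key : g * (g⁻¹ * g') = g' := by group
  rw [← key, shift_mul', hf x hx]

lemma mk_mul_comm {X : Set (G → A)} [(fixSubgroup X).Normal] {g : G}
    (hg : (QuotientGroup.mk g : G ⧸ fixSubgroup X) ∈ Subgroup.center _) (k : G) :
    (QuotientGroup.mk (g * k) : G ⧸ fixSubgroup X) = QuotientGroup.mk (k * g) := by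
  have hc := Subgroup.mem_center_iff.mp hg (QuotientGroup.mk k)
  rw [QuotientGroup.mk_mul, QuotientGroup.mk_mul, hc]

lemma apply_swap {X : Set (G → A)} [(fixSubgroup X).Normal] {g : G}
    (hg : (QuotientGroup.mk g : G ⧸ fixSubgroup X) ∈ Subgroup.center _)
    {x : G → A} (hx : x ∈ X) (h : G) : x (g * h) = x (h * g) := by
  have hf : g * h * g⁻¹ * h⁻¹ ∈ fixSubgroup X := by
    rw [← QuotientGroup.eq_one_iff]
    have hc := Subgroup.mem_center_iff.mp hg (QuotientGroup.mk h)
    simp only [QuotientGroup.mk_mul, QuotientGroup.mk_inv]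
    rw [← hc]
    group
  have hfx := hf x hx
  have harg : (g * h * g⁻¹ * h⁻¹)⁻¹ * (g * h) = h * g := by group
  calc x (g * h) = shift (g * h * g⁻¹ * h⁻¹) x (g * h) := by rw [hfx]
    _ = x (h * g) := by
        show x ((g * h * g⁻¹ * h⁻¹)⁻¹ * (g * h)) = x (h * g)
        rw [harg]

lemma continuous_shiftX [TopologicalSpace A] {X : Set (G → A)}
    (hX2 : ∀ g : G, ∀ x ∈ X, shift g x ∈ X) (g : G) :
    Continuous (shiftX X hX2 g) := by
  apply Continuous.subtype_mk
  exact continuous_pi fun h => (continuous_apply (g⁻¹ * h)).comp continuous_subtype_val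

end Aux

/-- the right shifts `τ_g` for `g·Fix(X)` central in `G/Fix(X)` form a
subgroup of the center of `Aut(X)` isomorphic to `Z(G/Fix(X))`: there is an injective
homomorphism from `Z(G/Fix(X))` into `Aut(X)` whose image lies in the center and which
sends the class of `g` to `τ_g`. -/
theorem stmt7 {G A : Type*} [Group G] [Fintype A] [TopologicalSpace A] [DiscreteTopology A]
    (X : Set (G → A)) (hX : IsSubshift X) [hN : (fixSubgroup X).Normal] :
    ∃ θ : Subgroup.center (G ⧸ fixSubgroup X) →* (Aut X hX.2),
      Function.Injective θ ∧
      (∀ γ : Subgroup.center (G ⧸ fixSubgroup X),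
        θ γ ∈ Subgroup.center (Aut X hX.2)) ∧
      ∀ (g : G) (hg : (QuotientGroup.mk g : G ⧸ fixSubgroup X) ∈
          Subgroup.center (G ⧸ fixSubgroup X)) (x : X) (h : G),
        ((θ ⟨QuotientGroup.mk g, hg⟩ : Equiv.Perm X) x : G → A) h = (x : G → A) (h * g) := by
  classical
  have hX2 := hX.2
  let rep : Subgroup.center (G ⧸ fixSubgroup X) → G := fun γ => (γ : G ⧸ fixSubgroup X).out
  have hrep : ∀ γ, (QuotientGroup.mk (rep γ) : G ⧸ fixSubgroup X) = γ :=
    fun γ => QuotientGroup.out_eq' _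
  have hcen : ∀ γ, (QuotientGroup.mk (rep γ) : G ⧸ fixSubgroup X) ∈
      Subgroup.center (G ⧸ fixSubgroup X) := by
    intro γ; rw [hrep]; exact γ.2
  have hceninv : ∀ γ, (QuotientGroup.mk (rep γ)⁻¹ : G ⧸ fixSubgroup X) ∈
      Subgroup.center (G ⧸ fixSubgroup X) := by
    intro γ
    have := (Subgroup.center (G ⧸ fixSubgroup X)).inv_mem (hcen γ)
    simpa using this
  -- the permutation τ_{rep γ}
  let P : Subgroup.center (G ⧸ fixSubgroup X) → Equiv.Perm X := fun γ =>
    { toFun := shiftX X hX2 (rep γ)⁻¹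
      invFun := shiftX X hX2 (rep γ)
      left_inv := fun x => Subtype.ext (by
        show shift (rep γ) (shift (rep γ)⁻¹ (x : G → A)) = (x : G → A)
        funext h; simp [shift, ← mul_assoc])
      right_inv := fun x => Subtype.ext (by
        show shift (rep γ)⁻¹ (shift (rep γ) (x : G → A)) = (x : G → A)
        funext h; simp [shift, ← mul_assoc]) }
  have hPval : ∀ γ (x : X), ((P γ x : X) : G → A) = shift (rep γ)⁻¹ (x : G → A) :=
    fun γ x => rfl
  have hcomm : ∀ γ (k : G) (x : G → A), x ∈ X →
      shift (rep γ)⁻¹ (shift k x) = shift k (shift (rep γ)⁻¹ x) := by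
    intro γ k x hx
    rw [← shift_mul', ← shift_mul']
    exact shift_congr (mk_mul_comm (hceninv γ) k) hx
  have hmem : ∀ γ, P γ ∈ Aut X hX2 := by
    intro γ
    refine ⟨continuous_shiftX hX2 _, continuous_shiftX hX2 _, fun k x => ?_⟩
    exact Subtype.ext (hcomm γ k (x : G → A) x.2)
  refine ⟨{ toFun := fun γ => ⟨P γ, hmem γ⟩, map_one' := ?_, map_mul' := ?_ }, ?_, ?_, ?_⟩
  · apply Subtype.ext
    apply Equiv.ext
    intro x
    apply Subtype.ext
    show shift (rep 1)⁻¹ (x : G → A) = (x : G → A)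
    have h1 : (QuotientGroup.mk (rep 1)⁻¹ : G ⧸ fixSubgroup X) = QuotientGroup.mk 1 := by
      have := hrep 1
      simp [this]
    calc shift (rep 1)⁻¹ (x : G → A) = shift 1 (x : G → A) := shift_congr h1 x.2
      _ = (x : G → A) := by funext h; simp [shift]
  · intro γ δ
    apply Subtype.ext
    apply Equiv.ext
    intro x
    apply Subtype.ext
    show shift (rep (γ * δ))⁻¹ (x : G → A) =
      shift (rep γ)⁻¹ (shift (rep δ)⁻¹ (x : G → A))
    rw [← shift_mul']
    apply shift_congr _ x.2
    have hc := Subgroup.mem_center_iff.mp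
      ((Subgroup.center (G ⧸ fixSubgroup X)).inv_mem γ.2) ((δ : G ⧸ fixSubgroup X)⁻¹)
    have h0 : (QuotientGroup.mk (rep (γ * δ)) : G ⧸ fixSubgroup X) =
        (γ : G ⧸ fixSubgroup X) * (δ : G ⧸ fixSubgroup X) := by
      rw [hrep]; rfl
    have : (QuotientGroup.mk (rep (γ * δ))⁻¹ : G ⧸ fixSubgroup X) =
        ((γ : G ⧸ fixSubgroup X) * (δ : G ⧸ fixSubgroup X))⁻¹ := by
      rw [QuotientGroup.mk_inv, h0]
    rw [this]
    have hr : (QuotientGroup.mk ((rep γ)⁻¹ * (rep δ)⁻¹) : G ⧸ fixSubgroup X) =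
        (γ : G ⧸ fixSubgroup X)⁻¹ * (δ : G ⧸ fixSubgroup X)⁻¹ := by
      rw [QuotientGroup.mk_mul, ← hrep γ, ← hrep δ]; simp
    rw [hr, mul_inv_rev, hc]
  · rw [injective_iff_map_eq_one]
    intro γ hγ
    have hfix : (rep γ)⁻¹ ∈ fixSubgroup X := by
      intro x hx
      have := congrArg (fun φ : (Aut X hX2) => ((φ : Equiv.Perm X) ⟨x, hx⟩ : X)) hγ
      have h2 : shift (rep γ)⁻¹ x = x := congrArg Subtype.val this
      exact h2
    have : (γ : G ⧸ fixSubgroup X)⁻¹ = 1 := by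
      rw [← hrep γ]
      have := (QuotientGroup.eq_one_iff ((rep γ)⁻¹)).mpr hfix
      simpa using this
    have : (γ : G ⧸ fixSubgroup X) = 1 := by
      rw [← inv_inv (γ : G ⧸ fixSubgroup X), this, inv_one]
    exact Subtype.ext this
  · intro γ
    rw [Subgroup.mem_center_iff]
    intro φ
    apply Subtype.ext
    apply Equiv.ext
    intro x
    show (φ : Equiv.Perm X) (P γ x) = P γ ((φ : Equiv.Perm X) x)
    have h3 := φ.2.2.2 (rep γ)⁻¹ x
    exact h3
  · intro g hg x h
    show shift (rep ⟨QuotientGroup.mk g, hg⟩)⁻¹ (x : G → A) h = (x : G → A) (h * g)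
    have hq : (QuotientGroup.mk (rep ⟨QuotientGroup.mk g, hg⟩)⁻¹ : G ⧸ fixSubgroup X) =
        QuotientGroup.mk g⁻¹ := by
      rw [QuotientGroup.mk_inv, QuotientGroup.mk_inv, hrep]
    have h1 : shift (rep ⟨QuotientGroup.mk g, hg⟩)⁻¹ (x : G → A) =
        shift g⁻¹ (x : G → A) := shift_congr hq x.2
    rw [h1]
    show (x : G → A) (g⁻¹⁻¹ * h) = (x : G → A) (h * g)
    rw [inv_inv]
    exact apply_swap hg x.2 h
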